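/- For two finite signed measures μ, ν supported in B(0,R), the non-local vector fields satisfy the stability estimate ‖V[μ] − V[ν]‖_{L^∞(B(0,R))} ≤ (L_φ + φ_R)·ρ(μ,ν), where φ_R = |φ(0)| + 2L_φR and ρ is the Bounded Lipschitz distance. -/

import Mathlib

open MeasureTheory
open scoped NNReal

/-- Integral of a vector-valued function against a finite signed measure. -/
noncomputable def sInt {d : ℕ} (μ : SignedMeasure (EuclideanSpace ℝ (Fin d)))
    (f : EuclideanSpace ℝ (Fin d) → EuclideanSpace ℝ (Fin d)) :
    EuclideanSpace ℝ (Fin d) :=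
  (∫ y, f y ∂μ.toJordanDecomposition.posPart) -
    (∫ y, f y ∂μ.toJordanDecomposition.negPart)

/-- Integral of a scalar function against a finite signed measure. -/
noncomputable def sIntR {d : ℕ} (μ : SignedMeasure (EuclideanSpace ℝ (Fin d)))
    (f : EuclideanSpace ℝ (Fin d) → ℝ) : ℝ :=
  (∫ y, f y ∂μ.toJordanDecomposition.posPart) -
    (∫ y, f y ∂μ.toJordanDecomposition.negPart)

/-- The non-local vector field `V[μ](x) = ∫ φ(x - y) dμ(y)`. -/
noncomputable def Vfield {d : ℕ} (φ : EuclideanSpace ℝ (Fin d) → EuclideanSpace ℝ (Fin d))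
    (μ : SignedMeasure (EuclideanSpace ℝ (Fin d))) (x : EuclideanSpace ℝ (Fin d)) :
    EuclideanSpace ℝ (Fin d) :=
  sInt μ (fun y => φ (x - y))

/-- Bounded Lipschitz (flat) distance between signed measures, by duality. -/
noncomputable def BLdist {d : ℕ} (μ ν : SignedMeasure (EuclideanSpace ℝ (Fin d))) : ℝ :=
  sSup {r | ∃ f : EuclideanSpace ℝ (Fin d) → ℝ, LipschitzWith 1 f ∧
    HasCompactSupport f ∧ (∀ x, |f x| ≤ 1) ∧ r = sIntR μ f - sIntR ν f}


lemma conc_parts {d : ℕ} (μ : SignedMeasure (EuclideanSpace ℝ (Fin d)))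
    {s : Set (EuclideanSpace ℝ (Fin d))} (h : μ.totalVariation s = 0) :
    μ.toJordanDecomposition.posPart s = 0 ∧ μ.toJordanDecomposition.negPart s = 0 := by
  have h2 : (μ.toJordanDecomposition.posPart + μ.toJordanDecomposition.negPart) s = 0 := h
  rw [Measure.add_apply] at h2
  exact ⟨(add_eq_zero.1 h2).1, (add_eq_zero.1 h2).2⟩

lemma integrable_of_conc {d : ℕ} {E : Type*} [NormedAddCommGroup E]
    (m : Measure (EuclideanSpace ℝ (Fin d))) [IsFiniteMeasure m] {R : ℝ}
    (hm : m (Metric.closedBall 0 R)ᶜ = 0) {f : EuclideanSpace ℝ (Fin d) → E}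
    (hf : Continuous f) : Integrable f m := by
  have hae : ∀ᵐ y ∂m, y ∈ Metric.closedBall (0 : EuclideanSpace ℝ (Fin d)) R :=
    ae_iff.2 hm
  rw [← Measure.restrict_eq_self_of_ae_mem hae]
  exact ContinuousOn.integrableOn_compact (isCompact_closedBall _ _) hf.continuousOn

lemma BLset_bddAbove {d : ℕ} (μ ν : SignedMeasure (EuclideanSpace ℝ (Fin d))) :
    BddAbove {r | ∃ f : EuclideanSpace ℝ (Fin d) → ℝ, LipschitzWith 1 f ∧
      HasCompactSupport f ∧ (∀ x, |f x| ≤ 1) ∧ r = sIntR μ f - sIntR ν f} := by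
  refine ⟨(μ.toJordanDecomposition.posPart Set.univ).toReal +
      (μ.toJordanDecomposition.negPart Set.univ).toReal +
      ((ν.toJordanDecomposition.posPart Set.univ).toReal +
      (ν.toJordanDecomposition.negPart Set.univ).toReal), ?_⟩
  rintro r ⟨f, hl, hc, hb, rfl⟩
  have key : ∀ (m : Measure (EuclideanSpace ℝ (Fin d))) [IsFiniteMeasure m],
      |∫ y, f y ∂m| ≤ (m Set.univ).toReal := by
    intro m _
    have := norm_integral_le_of_norm_le_const (μ := m) (f := f) (C := 1)
      (ae_of_all _ fun y => by simpa using hb y)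
    simpa [measureReal_def] using this
  have h1 := abs_le.1 (key μ.toJordanDecomposition.posPart)
  have h2 := abs_le.1 (key μ.toJordanDecomposition.negPart)
  have h3 := abs_le.1 (key ν.toJordanDecomposition.posPart)
  have h4 := abs_le.1 (key ν.toJordanDecomposition.negPart)
  unfold sIntR
  linarith [h1.1, h1.2, h2.1, h2.2, h3.1, h3.2, h4.1, h4.2]

lemma BLdist_nonneg' {d : ℕ} (μ ν : SignedMeasure (EuclideanSpace ℝ (Fin d))) :
    0 ≤ BLdist μ ν := by
  apply le_csSup (BLset_bddAbove μ ν)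
  refine ⟨fun _ => 0, ?_, ?_, fun x => by simp, by simp [sIntR]⟩
  · exact LipschitzWith.const' 0
  · have : Function.support (fun _ : EuclideanSpace ℝ (Fin d) => (0:ℝ)) = ∅ := by
      simp [Function.support]
    rw [HasCompactSupport, tsupport, this]
    simp

/-- stability of the non-local vector field in the BL distance:
`‖V[μ] - V[ν]‖_{L^∞(B(0,R))} ≤ (L_φ + φ_R) ρ(μ,ν)` with `φ_R = |φ(0)| + 2L_φ R`. -/
theorem Vfield_stability {d : ℕ} (R : ℝ) (hR : 0 < R)
    (φ : EuclideanSpace ℝ (Fin d) → EuclideanSpace ℝ (Fin d)) (Lφ : ℝ≥0)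
    (hφ : LipschitzWith Lφ φ)
    (μ ν : SignedMeasure (EuclideanSpace ℝ (Fin d)))
    (hμ : μ.totalVariation (Metric.closedBall 0 R)ᶜ = 0)
    (hν : ν.totalVariation (Metric.closedBall 0 R)ᶜ = 0) :
    ∀ x ∈ Metric.closedBall (0 : EuclideanSpace ℝ (Fin d)) R,
      ‖Vfield φ μ x - Vfield φ ν x‖ ≤
        ((Lφ : ℝ) + (‖φ 0‖ + 2 * (Lφ : ℝ) * R)) * BLdist μ ν := by
  intro x hx
  obtain ⟨hμp0, hμn0⟩ := conc_parts μ hμ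
  obtain ⟨hνp0, hνn0⟩ := conc_parts ν hν
  have hBL0 : 0 ≤ BLdist μ ν := BLdist_nonneg' μ ν
  set φR : ℝ := ‖φ 0‖ + 2 * (Lφ : ℝ) * R with hφRdef
  have hφR0 : 0 ≤ φR := by positivity
  set c : ℝ := (Lφ : ℝ) + φR with hcdef
  have hc0 : 0 ≤ c := by positivity
  have hLc : (Lφ : ℝ) ≤ c := by simp [hcdef, hφR0]
  have hφRc : φR ≤ c := by simp [hcdef, Lφ.coe_nonneg]
  set v := Vfield φ μ x - Vfield φ ν x with hv
  by_cases hv0 : v = 0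
  · rw [hv0, norm_zero]; exact mul_nonneg hc0 hBL0
  have hcpos : 0 < c := by
    rcases hc0.lt_or_eq with h | h
    · exact h
    exfalso
    have hL0 : (Lφ : ℝ) = 0 := by
      have := Lφ.coe_nonneg; nlinarith [norm_nonneg (φ 0), hR]
    have hφ00 : ‖φ 0‖ = 0 := by nlinarith [Lφ.coe_nonneg, norm_nonneg (φ 0), hR]
    have hφzero : ∀ y, φ y = 0 := by
      intro y
      have h1 := hφ.dist_le_mul y 0
      rw [hL0] at h1
      simp only [zero_mul] at h1
      have : φ y = φ 0 := by
        rwa [dist_le_zero] at h1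
      rw [this, ← norm_eq_zero, hφ00]
    apply hv0
    have hz : ∀ (σ : SignedMeasure (EuclideanSpace ℝ (Fin d))), Vfield φ σ x = 0 := by
      intro σ
      have : (fun y => φ (x - y)) = fun _ => (0 : EuclideanSpace ℝ (Fin d)) := by
        funext y; exact hφzero _
      simp [Vfield, sInt, this]
    rw [hv, hz, hz, sub_zero]
  have hnv : 0 < ‖v‖ := norm_pos_iff.2 hv0
  set e : EuclideanSpace ℝ (Fin d) := ‖v‖⁻¹ • v with he
  have hee : ‖e‖ = 1 := by
    rw [he, norm_smul, norm_inv, norm_norm, inv_mul_cancel₀ hnv.ne']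
  set g : EuclideanSpace ℝ (Fin d) → ℝ := fun y => inner ℝ e (φ (x - y)) with hgdef
  have hgl : ∀ a b, |g a - g b| ≤ (Lφ : ℝ) * dist a b := by
    intro a b
    have h1 : g a - g b = inner ℝ e (φ (x - a) - φ (x - b)) := by
      simp [hgdef, inner_sub_right]
    rw [h1]
    calc |inner ℝ e (φ (x - a) - φ (x - b))| ≤ ‖e‖ * ‖φ (x - a) - φ (x - b)‖ :=
          abs_real_inner_le_norm _ _
      _ = ‖φ (x - a) - φ (x - b)‖ := by rw [hee, one_mul]
      _ ≤ (Lφ : ℝ) * dist a b := by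
          have h2 := hφ.dist_le_mul (x - a) (x - b)
          rwa [dist_eq_norm, dist_sub_left] at h2
  have hgb : ∀ y ∈ Metric.closedBall (0 : EuclideanSpace ℝ (Fin d)) R, |g y| ≤ φR := by
    intro y hy
    have hxR : ‖x‖ ≤ R := by simpa using hx
    have hyR : ‖y‖ ≤ R := by simpa using hy
    calc |g y| ≤ ‖e‖ * ‖φ (x - y)‖ := abs_real_inner_le_norm _ _
      _ = ‖φ (x - y)‖ := by rw [hee, one_mul]
      _ ≤ ‖φ 0‖ + ‖φ (x - y) - φ 0‖ := norm_le_insert' _ _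
      _ ≤ ‖φ 0‖ + (Lφ : ℝ) * ‖x - y‖ := by
          have h2 := hφ.dist_le_mul (x - y) 0
          rw [dist_eq_norm, dist_zero_right] at h2
          linarith
      _ ≤ φR := by
          have h3 : ‖x - y‖ ≤ ‖x‖ + ‖y‖ := norm_sub_le _ _
          have := Lφ.coe_nonneg
          rw [hφRdef]
          nlinarith
  set M : EuclideanSpace ℝ (Fin d) → ℝ := fun y => max 0 (φR - c * max 0 (‖y‖ - R)) with hMdef
  have hM0 : ∀ y, 0 ≤ M y := fun y => le_max_left _ _
  have hMle : ∀ y, M y ≤ φR := by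
    intro y
    apply max_le hφR0
    have : 0 ≤ c * max 0 (‖y‖ - R) := mul_nonneg hc0 (le_max_left _ _)
    linarith
  have hMl : ∀ a b, |M a - M b| ≤ c * dist a b := by
    intro a b
    calc |M a - M b| ≤ max |(0:ℝ) - 0| |(φR - c * max 0 (‖a‖ - R)) - (φR - c * max 0 (‖b‖ - R))| :=
          abs_max_sub_max_le_max _ _ _ _
      _ ≤ c * dist a b := by
          apply max_le
          · simp [mul_nonneg hc0 dist_nonneg]
          · have h1 : (φR - c * max 0 (‖a‖ - R)) - (φR - c * max 0 (‖b‖ - R)) =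
                -(c * (max 0 (‖a‖ - R) - max 0 (‖b‖ - R))) := by ring
            rw [h1, abs_neg, abs_mul, abs_of_nonneg hc0]
            apply mul_le_mul_of_nonneg_left _ hc0
            calc |max 0 (‖a‖ - R) - max 0 (‖b‖ - R)| ≤ max |(0:ℝ) - 0| |(‖a‖ - R) - (‖b‖ - R)| :=
                  abs_max_sub_max_le_max _ _ _ _
              _ ≤ dist a b := by
                  apply max_le (by simp [dist_nonneg])
                  have : (‖a‖ - R) - (‖b‖ - R) = ‖a‖ - ‖b‖ := by ring
                  rw [this, dist_eq_norm]
                  exact abs_norm_sub_norm_le _ _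
  set f : EuclideanSpace ℝ (Fin d) → ℝ := fun y => max (-(M y)) (min (g y) (M y)) with hfdef
  have hfl : ∀ a b, |f a - f b| ≤ c * dist a b := by
    intro a b
    calc |f a - f b| ≤ max |(-(M a)) - (-(M b))| |min (g a) (M a) - min (g b) (M b)| :=
          abs_max_sub_max_le_max _ _ _ _
      _ ≤ c * dist a b := by
          apply max_le
          · have : (-(M a)) - (-(M b)) = -(M a - M b) := by ring
            rw [this, abs_neg]; exact hMl a b
          · refine le_trans (abs_min_sub_min_le_max _ _ _ _) (max_le ?_ (hMl a b))
            exact le_trans (hgl a b) (mul_le_mul_of_nonneg_right hLc dist_nonneg)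
  have hfb : ∀ y, |f y| ≤ M y := by
    intro y
    rw [abs_le]
    constructor
    · exact neg_le_neg_iff.mpr (le_refl _) |>.trans (le_max_left _ _) |>.trans (le_refl _)
    · exact max_le (le_trans (neg_nonpos.2 (hM0 y)) (hM0 y)) (min_le_right _ _)
  have hfg : ∀ y ∈ Metric.closedBall (0 : EuclideanSpace ℝ (Fin d)) R, f y = g y := by
    intro y hy
    have hyR : ‖y‖ ≤ R := by simpa using hy
    have h1 : max 0 (‖y‖ - R) = 0 := max_eq_left (by linarith)
    have h2 : M y = φR := by rw [hMdef]; simp only [h1, mul_zero, sub_zero]; exact max_eq_right hφR0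
    have h3 := abs_le.1 (hgb y hy)
    rw [hfdef]
    simp only [h2]
    rw [min_eq_left h3.2, max_eq_right (by linarith [h3.1])]
  set F : EuclideanSpace ℝ (Fin d) → ℝ := fun y => c⁻¹ * f y with hFdef
  have hFl : LipschitzWith 1 F := by
    apply LipschitzWith.of_dist_le_mul
    intro a b
    rw [Real.dist_eq, NNReal.coe_one, one_mul]
    have : F a - F b = c⁻¹ * (f a - f b) := by rw [hFdef]; ring
    rw [this, abs_mul, abs_of_nonneg (inv_nonneg.2 hc0)]
    calc c⁻¹ * |f a - f b| ≤ c⁻¹ * (c * dist a b) :=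
          mul_le_mul_of_nonneg_left (hfl a b) (inv_nonneg.2 hc0)
      _ = dist a b := by field_simp
  have hFb : ∀ y, |F y| ≤ 1 := by
    intro y
    rw [hFdef]
    simp only
    rw [abs_mul, abs_of_nonneg (inv_nonneg.2 hc0)]
    calc c⁻¹ * |f y| ≤ c⁻¹ * c := by
          apply mul_le_mul_of_nonneg_left _ (inv_nonneg.2 hc0)
          exact (hfb y).trans ((hMle y).trans hφRc)
      _ = 1 := inv_mul_cancel₀ hcpos.ne'
  have hFs : HasCompactSupport F := by
    apply HasCompactSupport.intro (isCompact_closedBall (0 : EuclideanSpace ℝ (Fin d)) (R + 1))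
    intro y hy
    have hyR : R + 1 < ‖y‖ := by simpa using hy
    have h1 : max 0 (‖y‖ - R) = ‖y‖ - R := max_eq_right (by linarith)
    have h2 : φR - c * max 0 (‖y‖ - R) ≤ 0 := by
      rw [h1]
      have : c * 1 ≤ c * (‖y‖ - R) := mul_le_mul_of_nonneg_left (by linarith) hc0
      nlinarith
    have h3 : M y = 0 := max_eq_left h2
    have h4 : f y = 0 := by
      rw [hfdef]
      simp only [h3, neg_zero]
      rw [max_eq_left (min_le_right _ _)]
    rw [hFdef]
    simp [h4]
  have hφcont : Continuous fun y => φ (x - y) :=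
    hφ.continuous.comp (continuous_const.sub continuous_id)
  have key : ∀ (m : Measure (EuclideanSpace ℝ (Fin d))) [IsFiniteMeasure m],
      m (Metric.closedBall 0 R)ᶜ = 0 →
      ∫ y, F y ∂m = c⁻¹ * inner ℝ e (∫ y, φ (x - y) ∂m) := by
    intro m _ hm0
    have hae : ∀ᵐ y ∂m, y ∈ Metric.closedBall (0 : EuclideanSpace ℝ (Fin d)) R := ae_iff.2 hm0
    have hint : Integrable (fun y => φ (x - y)) m := integrable_of_conc m hm0 hφcont
    have h1 : ∫ y, F y ∂m = ∫ y, c⁻¹ * g y ∂m := by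
      apply integral_congr_ae
      filter_upwards [hae] with y hy
      rw [hFdef]
      simp only
      rw [hfg y hy]
    rw [h1, integral_const_mul]
    congr 1
    exact integral_inner hint e
  have hμpF := key μ.toJordanDecomposition.posPart hμp0
  have hμnF := key μ.toJordanDecomposition.negPart hμn0
  have hνpF := key ν.toJordanDecomposition.posPart hνp0
  have hνnF := key ν.toJordanDecomposition.negPart hνn0
  have hinner : (inner ℝ e v : ℝ) = ‖v‖ := by
    rw [he, real_inner_smul_left, real_inner_self_eq_norm_mul_norm]
    field_simp
  have hmem : sIntR μ F - sIntR ν F = c⁻¹ * ‖v‖ := by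
    rw [sIntR, sIntR, hμpF, hμnF, hνpF, hνnF, ← hinner]
    rw [hv, Vfield, Vfield, sInt, sInt]
    rw [inner_sub_right, inner_sub_right, inner_sub_right]
    ring
  have hle : sIntR μ F - sIntR ν F ≤ BLdist μ ν := by
    apply le_csSup (BLset_bddAbove μ ν)
    exact ⟨F, hFl, hFs, hFb, rfl⟩
  calc ‖v‖ = c * (c⁻¹ * ‖v‖) := by field_simp
    _ = c * (sIntR μ F - sIntR ν F) := by rw [hmem]
    _ ≤ c * BLdist μ ν := mul_le_mul_of_nonneg_left hle hc0
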